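/- arXiv:1203.5384 — 4 statements merged into one kernel-verified Lean document; each statement's English description precedes it below -/
import Mathlib

section
/- Let H be a finite dimensional semisimple Hopf algebra over a field of characteristic 0 with left integral t satisfying ε(t) = 1, let B be a finite dimensional H-module algebra, I₁ an H-invariant two-sided ideal of B, and π : B → I₁ a projection satisfying π(ab) = aπ(b) = π(a)b for all a,b ∈ B. Define π̃(a) := t₍₁₎ · π((S t₍₂₎) · a). Then π̃ is a projection of B onto I₁ satisfying π̃(ab) = a π̃(b) = π̃(a) b for all a,b ∈ B, and π̃(h·a) = h·π̃(a) for all h ∈ H, a ∈ B; consequently ker π̃ is an H-invariant two-sided ideal with B = I₁ ⊕ ker π̃. -/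
open TensorProduct
open Coalgebra

set_option maxHeartbeats 2000000
set_option synthInstance.maxHeartbeats 1000000

/-- Maschke-type trick for `H`-module algebras: given a left integral `t` with `ε(t) = 1`,
an `H`-invariant two-sided ideal `I₁` of an `H`-module algebra `B`, and a `B`-bimodule
projection `π` of `B` onto `I₁`, the averaged map `π̃(a) = t₍₁₎ · π((S t₍₂₎) · a)` is a
`B`-bimodule and `H`-equivariant projection onto `I₁`, its kernel is an `H`-invariant
two-sided ideal, and `B = I₁ ⊕ ker π̃`. -/
theorem hopf_maschke_projection (F : Type*) [Field F] [CharZero F]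
    (H : Type*) [Ring H] [HopfAlgebra F H] [FiniteDimensional F H] [IsSemisimpleRing H]
    (B : Type*) [Ring B] [Algebra F B] [FiniteDimensional F B]
    -- the `H`-module algebra structure on `B`:
    (ρ : H →ₐ[F] Module.End F B)
    (hmod : ∀ (h : H) (a b : B),
      ρ h (a * b) = LinearMap.mul' F B
        ((TensorProduct.homTensorHomMap (RingHom.id F) B B B B)
          ((TensorProduct.map ρ.toLinearMap ρ.toLinearMap) (Coalgebra.comul h))
          (a ⊗ₜ[F] b)))
    -- a left integral with ε(t) = 1:
    (t : H) (ht : ∀ h : H, h * t = Coalgebra.counit (R := F) h • t)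
    (hεt : Coalgebra.counit (R := F) t = 1)
    -- an `H`-invariant two-sided ideal `I₁`:
    (I₁ : Submodule F B)
    (hI₁ideal : ∀ b : B, ∀ x ∈ I₁, b * x ∈ I₁ ∧ x * b ∈ I₁)
    (hI₁inv : ∀ (h : H), ∀ x ∈ I₁, ρ h x ∈ I₁)
    -- a projection `π` of `B` onto `I₁` which is a bimodule map:
    (π : B →ₗ[F] B)
    (hπrange : ∀ a : B, π a ∈ I₁)
    (hπid : ∀ x ∈ I₁, π x = x)
    (hπbimod : ∀ a b : B, π (a * b) = a * π b ∧ π (a * b) = π a * b) :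
    -- the averaged projection `π̃(a) = t₍₁₎ · π((S t₍₂₎) · a)`:
    ∀ πt : B →ₗ[F] B,
      πt = (TensorProduct.lift (ρ.toLinearMap : H →ₗ[F] B →ₗ[F] B)) ∘ₗ
        (TensorProduct.map LinearMap.id π) ∘ₗ
        (TensorProduct.map LinearMap.id
          (TensorProduct.lift (ρ.toLinearMap : H →ₗ[F] B →ₗ[F] B))) ∘ₗ
        (TensorProduct.map LinearMap.id
          (TensorProduct.map (HopfAlgebra.antipode (R := F)) LinearMap.id)) ∘ₗ
        (TensorProduct.assoc F H H B).toLinearMap ∘ₗ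
        (TensorProduct.mk F (H ⊗[F] H) B (Coalgebra.comul t)) →
      (∀ a : B, πt a ∈ I₁) ∧
      (∀ x ∈ I₁, πt x = x) ∧
      (∀ a b : B, πt (a * b) = a * πt b ∧ πt (a * b) = πt a * b) ∧
      (∀ (h : H) (a : B), πt (ρ h a) = ρ h (πt a)) ∧
      (∀ b : B, ∀ x ∈ LinearMap.ker πt, b * x ∈ LinearMap.ker πt ∧
        x * b ∈ LinearMap.ker πt) ∧
      (∀ (h : H), ∀ x ∈ LinearMap.ker πt, ρ h x ∈ LinearMap.ker πt) ∧
      IsCompl I₁ (LinearMap.ker πt) := by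
  intro πt hπt
  set S : H →ₗ[F] H := HopfAlgebra.antipode (R := F) with hS
  set ν : H →ₗ[F] B →ₗ[F] B := (ρ.toLinearMap : H →ₗ[F] B →ₗ[F] B) with hν
  -- π is two-sided multiplication by the central element e := π 1
  set e : B := π 1 with he
  have hπl : ∀ z : B, π z = e * z := fun z => by
    have := (hπbimod 1 z).2; rwa [one_mul] at this
  have hπr : ∀ z : B, π z = z * e := fun z => by
    have := (hπbimod z 1).1; rwa [mul_one] at this
  have he₁ : e ∈ I₁ := hπrange 1
  -- basic unfolding of πt
  have hπt_apply : ∀ a : B, πt a = ∑ i ∈ (ℛ F t).index,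
      ρ ((ℛ F t).left i) (π (ρ (S ((ℛ F t).right i)) a)) := by
    intro a
    rw [hπt]
    simp only [LinearMap.coe_comp, Function.comp_apply, LinearEquiv.coe_coe,
      TensorProduct.mk_apply]
    rw [← (ℛ F t).eq]
    simp [TensorProduct.sum_tmul, map_sum, hν]
  -- multiplicativity of the action, in representation form
  have hmod' : ∀ (h : H) (a b : B), ρ h (a * b) =
      ∑ i ∈ (ℛ F h).index, ρ ((ℛ F h).left i) a * ρ ((ℛ F h).right i) b := by
    intro h a b
    rw [hmod, ← (ℛ F h).eq]
    simp [map_sum, LinearMap.sum_apply, hν]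
  -- counit sums
  have hcount_r : ∀ h : H, ∑ i ∈ (ℛ F h).index,
      counit (R := F) ((ℛ F h).right i) • (ℛ F h).left i = h := by
    intro h
    have h1 := Coalgebra.sum_tmul_counit_eq (R := F) (ℛ F h)
    have h2 := congrArg (TensorProduct.rid F H) h1
    simp only [map_sum, TensorProduct.rid_tmul, one_smul] at h2
    exact h2
  have hcount_l : ∀ h : H, ∑ i ∈ (ℛ F h).index,
      counit (R := F) ((ℛ F h).left i) • (ℛ F h).right i = h := by
    intro h
    have h1 := Coalgebra.sum_counit_tmul_eq (R := F) (ℛ F h)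
    have h2 := congrArg (TensorProduct.lid F H) h1
    simp only [map_sum, TensorProduct.lid_tmul, one_smul] at h2
    exact h2
  set et : B := ρ t e with het
  -- KEY: πt is left multiplication by et
  have key : ∀ a : B, πt a = et * a := by
    intro a
    set f₂ : H ⊗[F] H →ₗ[F] H := LinearMap.mul' F H ∘ₗ LinearMap.lTensor H S with hf₂
    set g : H ⊗[F] H →ₗ[F] B := (ν ∘ₗ f₂).flip a with hg
    set Φ : H ⊗[F] (H ⊗[F] H) →ₗ[F] B :=
      LinearMap.mul' F B ∘ₗ TensorProduct.map (ν.flip e) g with hΦ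
    set Φ' : (H ⊗[F] H) ⊗[F] H →ₗ[F] B :=
      Φ ∘ₗ (TensorProduct.assoc F H H H).toLinearMap with hΦ'
    have step1 : ∀ (x y : H), ρ x (e * ρ (S y) a) =
        Φ' ((Coalgebra.comul (R := F) x) ⊗ₜ[F] y) := by
      intro x y
      rw [hmod' x e (ρ (S y) a), ← (ℛ F x).eq]
      rw [TensorProduct.sum_tmul]
      rw [map_sum]
      refine Finset.sum_congr rfl fun i _ => ?_
      simp only [hΦ', hΦ, hg, hf₂, LinearMap.coe_comp, Function.comp_apply,
        LinearEquiv.coe_coe, TensorProduct.assoc_tmul, TensorProduct.map_tmul,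
        LinearMap.mul'_apply, LinearMap.flip_apply, LinearMap.lTensor_tmul]
      rw [hν]
      simp only [AlgHom.toLinearMap_apply, map_mul]
      rw [Module.End.mul_apply]
    have step2 : πt a = Φ' ((Coalgebra.comul (R := F)).rTensor H
        (Coalgebra.comul (R := F) t)) := by
      rw [hπt_apply a]
      conv_rhs => rw [← (ℛ F t).eq]
      rw [map_sum, map_sum]
      refine Finset.sum_congr rfl fun i _ => ?_
      rw [hπl, step1]
      simp [LinearMap.rTensor_tmul]
    have step3 : πt a = Φ ((Coalgebra.comul (R := F)).lTensor H
        (Coalgebra.comul (R := F) t)) := by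
      rw [step2, hΦ']
      rw [LinearMap.comp_apply]
      simp only [LinearEquiv.coe_coe]
      rw [Coalgebra.coassoc_apply]
    rw [step3]
    conv_lhs => rw [← (ℛ F t).eq]
    rw [map_sum, map_sum]
    have step4 : ∀ i ∈ (ℛ F t).index,
        Φ ((ℛ F t).left i ⊗ₜ[F] Coalgebra.comul (R := F) ((ℛ F t).right i)) =
        counit (R := F) ((ℛ F t).right i) • (ρ ((ℛ F t).left i) e * a) := by
      intro i _
      simp only [hΦ, LinearMap.coe_comp, Function.comp_apply, TensorProduct.map_tmul,
        LinearMap.mul'_apply, LinearMap.flip_apply, hg]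
      rw [hf₂]
      simp only [LinearMap.coe_comp, Function.comp_apply]
      rw [hS, HopfAlgebra.mul_antipode_lTensor_comul_apply, hν]
      simp only [AlgHom.toLinearMap_apply, AlgHom.commutes,
        Module.algebraMap_end_apply]
      rw [mul_smul_comm]
    simp only [LinearMap.lTensor_tmul]
    rw [Finset.sum_congr rfl step4]
    have : ∑ i ∈ (ℛ F t).index,
        counit (R := F) ((ℛ F t).right i) • (ρ ((ℛ F t).left i) e * a) =
        (ρ (∑ i ∈ (ℛ F t).index,
          counit (R := F) ((ℛ F t).right i) • (ℛ F t).left i) e) * a := by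
      rw [map_sum]
      simp only [LinearMap.sum_apply, Finset.sum_mul]
      refine Finset.sum_congr rfl fun i _ => ?_
      rw [map_smul, LinearMap.smul_apply, smul_mul_assoc]
    rw [this, hcount_r t, het]
  -- πt fixes I₁
  have fix : ∀ x ∈ I₁, πt x = x := by
    intro x hx
    rw [hπt_apply x]
    have : ∀ i ∈ (ℛ F t).index,
        ρ ((ℛ F t).left i) (π (ρ (S ((ℛ F t).right i)) x)) =
        ρ ((ℛ F t).left i * S ((ℛ F t).right i)) x := by
      intro i _
      rw [hπid _ (hI₁inv _ _ hx), map_mul, Module.End.mul_apply]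
    rw [Finset.sum_congr rfl this]
    have : ∑ i ∈ (ℛ F t).index,
        ρ ((ℛ F t).left i * S ((ℛ F t).right i)) x =
        ρ (∑ i ∈ (ℛ F t).index, (ℛ F t).left i * S ((ℛ F t).right i)) x := by
      rw [map_sum, LinearMap.sum_apply]
    rw [this, hS]
    rw [HopfAlgebra.sum_mul_antipode_eq_smul (ℛ F t), hεt, one_smul, map_one,
      Module.End.one_apply]
  -- equivariance
  have equiv : ∀ (h : H) (a : B), ρ h (et * a) = et * ρ h a := by
    intro h a
    rw [hmod' h et a]
    have : ∀ i ∈ (ℛ F h).index,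
        ρ ((ℛ F h).left i) et * ρ ((ℛ F h).right i) a =
        counit (R := F) ((ℛ F h).left i) • (et * ρ ((ℛ F h).right i) a) := by
      intro i _
      rw [het, ← Module.End.mul_apply, ← map_mul, ht, map_smul, LinearMap.smul_apply,
        smul_mul_assoc]
    rw [Finset.sum_congr rfl this]
    have : ∑ i ∈ (ℛ F h).index,
        counit (R := F) ((ℛ F h).left i) • (et * ρ ((ℛ F h).right i) a) =
        et * ρ (∑ i ∈ (ℛ F h).index,
          counit (R := F) ((ℛ F h).left i) • (ℛ F h).right i) a := by
      rw [map_sum, LinearMap.sum_apply, Finset.mul_sum]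
      refine Finset.sum_congr rfl fun i _ => ?_
      rw [map_smul, LinearMap.smul_apply, mul_smul_comm]
    rw [this, hcount_l h]
  -- consequences
  have hetI : et ∈ I₁ := hI₁inv t e he₁
  have fixet : ∀ x ∈ I₁, et * x = x := fun x hx => (key x).symm.trans (fix x hx)
  have hete : et * e = e := fixet e he₁
  have hee : ∀ x ∈ I₁, x * e = x := fun x hx => by rw [← hπr, hπid x hx]
  have idem : et * et = et := fixet et hetI
  have central : ∀ a : B, et * a = a * et := by
    intro a
    have h1 : a * et ∈ I₁ := (hI₁ideal a et hetI).1
    have h2 : et * a ∈ I₁ := (hI₁ideal a et hetI).2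
    have h3 : et * (a * et) = a * et := fixet _ h1
    have h4 : et * a * et ∈ I₁ := (hI₁ideal et (et * a) h2).2
    have h5 : (et * a - et * a * et) ∈ I₁ := sub_mem h2 h4
    have h6 : et * a - et * a * et = (et * a - et * a * et) * e := (hee _ h5).symm
    have h7 : (et * a - et * a * et) * e = 0 := by
      rw [sub_mul, mul_assoc (et * a) et e, hete, sub_self]
    have h8 : et * a = et * a * et := sub_eq_zero.mp (h6.trans h7)
    rw [h8, mul_assoc, h3]
  refine ⟨?_, fix, ?_, ?_, ?_, ?_, ?_, ?_⟩
  · intro a; rw [key a]; exact (hI₁ideal a et hetI).2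
  · intro a b
    constructor
    · rw [key (a * b), key b, ← mul_assoc, ← mul_assoc, central a]
    · rw [key (a * b), key a, mul_assoc]
  · intro h a; rw [key (ρ h a), key a, equiv]
  · intro b x hx
    have hx0 : et * x = 0 := by rw [← key x]; exact LinearMap.mem_ker.mp hx
    constructor
    · refine LinearMap.mem_ker.mpr ?_
      rw [key, ← mul_assoc, central b, mul_assoc, hx0, mul_zero]
    · refine LinearMap.mem_ker.mpr ?_
      rw [key, ← mul_assoc, hx0, zero_mul]
  · intro h x hx
    have hx0 : et * x = 0 := by rw [← key x]; exact LinearMap.mem_ker.mp hx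
    refine LinearMap.mem_ker.mpr ?_
    rw [key, ← equiv h x, hx0, map_zero]
  · refine Submodule.disjoint_def.mpr fun x hxI hxK => ?_
    rw [← fix x hxI]
    exact LinearMap.mem_ker.mp hxK
  · rw [codisjoint_iff, eq_top_iff]
    intro a _
    refine Submodule.mem_sup.mpr ⟨πt a, ?_, a - πt a, ?_, by abel⟩
    · rw [key a]; exact (hI₁ideal a et hetI).2
    · refine LinearMap.mem_ker.mpr ?_
      rw [map_sub, key (πt a), key a, ← mul_assoc, idem, sub_self]
end

section
/- Let B be a finite dimensional semisimple H-module algebra over a field of characteristic 0, where H is a finite dimensional semisimple Hopf algebra. Then B decomposes as a direct sum of ideals B = B₁ ⊕ B₂ ⊕ ... ⊕ B_q where each B_i is an H-invariant ideal that is H-simple (i.e. has no nonzero proper H-invariant two-sided ideals). -/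
open TensorProduct

/-! ### Auxiliary lattice lemmas -/

section ConsLemmas
variable {α : Type*} [CompleteLattice α] [IsModularLattice α]

omit [IsModularLattice α] in
lemma my_iSup_cons {q : ℕ} (Q : α) (Bs : Fin q → α) :
    ⨆ i, Fin.cons Q Bs i = Q ⊔ ⨆ i, Bs i := by
  apply le_antisymm
  · refine iSup_le ?_
    intro i
    refine Fin.cases ?_ ?_ i
    · simp
    · intro k
      simp only [Fin.cons_succ]
      exact le_trans (le_iSup Bs k) le_sup_right
  · refine sup_le ?_ (iSup_le fun k => ?_)
    · exact le_iSup (Fin.cons Q Bs) 0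
    · simpa using le_iSup (Fin.cons Q Bs) k.succ

lemma my_iSupIndep_cons {q : ℕ} {Q : α} {Bs : Fin q → α}
    (h1 : iSupIndep Bs) (h2 : Disjoint Q (⨆ i, Bs i)) :
    iSupIndep (Fin.cons Q Bs) := by
  intro i
  refine Fin.cases ?_ ?_ i
  · refine h2.mono_right ?_
    refine iSup_le fun j => iSup_le fun hj => ?_
    obtain ⟨k, rfl⟩ := Fin.eq_succ_of_ne_zero hj
    simpa using le_iSup Bs k
  · intro k
    have hle : (⨆ j, ⨆ (_ : j ≠ k.succ), Fin.cons Q Bs j)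
        ≤ (⨆ l, ⨆ (_ : l ≠ k), Bs l) ⊔ Q := by
      refine iSup_le fun j => iSup_le ?_
      refine Fin.cases ?_ ?_ j
      · intro _
        exact le_sup_right
      · intro l hl
        have hlk : l ≠ k := fun h => hl (by rw [h])
        simp only [Fin.cons_succ]
        exact le_trans (le_iSup₂ (f := fun l (_ : l ≠ k) => Bs l) l hlk) le_sup_left
    have d1 : Disjoint (Bs k) (⨆ l, ⨆ (_ : l ≠ k), Bs l) := h1 k
    have d2 : Disjoint (Bs k ⊔ (⨆ l, ⨆ (_ : l ≠ k), Bs l)) Q := by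
      refine h2.symm.mono_left ?_
      exact sup_le (le_iSup Bs k) (iSup_le fun l => iSup_le fun _ => le_iSup Bs l)
    simpa using (d1.disjoint_sup_right_of_disjoint_sup_left d2).mono_right hle

end ConsLemmas

/-! ### Two-sided ideals in a semisimple ring -/

section Semisimple
variable {F : Type*} [Field F] {B : Type*} [Ring B] [Algebra F B] [IsSemisimpleRing B]

/-- view a left-closed `F`-subspace as a left `B`-submodule -/
def toLeftSub (I : Submodule F B) (hl : ∀ b : B, ∀ x ∈ I, b * x ∈ I) : Submodule B B where
  carrier := I
  add_mem' := fun ha hb => I.add_mem ha hb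
  zero_mem' := I.zero_mem
  smul_mem' := fun b x hx => hl b x hx

/-- any left-closed `F`-subspace of a semisimple ring has a right unit -/
lemma exists_right_unit (I : Submodule F B) (hl : ∀ b : B, ∀ x ∈ I, b * x ∈ I) :
    ∃ e ∈ I, ∀ y ∈ I, y * e = y := by
  obtain ⟨C, hC⟩ := exists_isCompl (toLeftSub I hl)
  set P := Submodule.linearProjOfIsCompl _ C hC with hP
  refine ⟨(P 1 : B), (P 1).2, fun y hy => ?_⟩
  have h1 : P y = ⟨y, hy⟩ := Submodule.linearProjOfIsCompl_apply_left hC ⟨y, hy⟩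
  have h2 : (y : B) • P (1 : B) = P (y • (1 : B)) := (map_smul P y 1).symm
  rw [smul_eq_mul, mul_one, h1] at h2
  have := congrArg Subtype.val h2
  simpa [smul_eq_mul] using this

lemma nilpotent_eq_bot (T : Submodule F B) (hl : ∀ b : B, ∀ x ∈ T, b * x ∈ T)
    (hsq : ∀ x ∈ T, ∀ y ∈ T, x * y = 0) : T = ⊥ := by
  obtain ⟨e, he, hu⟩ := exists_right_unit T hl
  rw [eq_bot_iff]
  intro y hy
  have : y * e = y := hu y hy
  rw [hsq y hy e he] at this
  simpa using this.symm

/-- a two-sided `F`-ideal of a semisimple ring has a two-sided unit -/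
lemma exists_unit (I : Submodule F B) (hl : ∀ b : B, ∀ x ∈ I, b * x ∈ I)
    (hr : ∀ b : B, ∀ x ∈ I, x * b ∈ I) :
    ∃ e ∈ I, (∀ y ∈ I, e * y = y) ∧ (∀ y ∈ I, y * e = y) := by
  obtain ⟨e, he, hu⟩ := exists_right_unit I hl
  set gen : Set B := {z | ∃ b : B, ∃ x ∈ I, z = b * (x - e * x)} with hgen
  set T : Submodule F B := Submodule.span F gen with hT
  have hgenI : gen ⊆ I := by
    rintro z ⟨b, x, hx, rfl⟩
    exact hl b _ (I.sub_mem hx (hl e x hx))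
  have hTI : T ≤ I := Submodule.span_le.mpr hgenI
  have hTl : ∀ b : B, ∀ x ∈ T, b * x ∈ T := by
    intro b x hx
    induction hx using Submodule.span_induction with
    | mem z hz =>
        obtain ⟨b', x', hx', rfl⟩ := hz
        exact Submodule.subset_span ⟨b * b', x', hx', by rw [mul_assoc]⟩
    | zero => simp [T.zero_mem]
    | add u v _ _ hu hv => simpa [mul_add] using T.add_mem hu hv
    | smul c u _ hu => simpa [mul_smul_comm] using T.smul_mem c hu
  have hIgen : ∀ s ∈ I, ∀ t ∈ T, s * t = 0 := by
    intro s hs t ht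
    induction ht using Submodule.span_induction with
    | mem z hz =>
        obtain ⟨b, x, hx, rfl⟩ := hz
        have h1 : s * (b * (x - e * x)) = (s * b) * x - ((s * b) * e) * x := by
          noncomm_ring
        rw [h1, hu (s * b) (hr b s hs), sub_self]
    | zero => simp
    | add u v _ _ hu' hv' => rw [mul_add, hu', hv', add_zero]
    | smul c u _ hu' => rw [mul_smul_comm, hu', smul_zero]
  have hTbot : T = ⊥ :=
    nilpotent_eq_bot T hTl (fun s hs t ht => hIgen s (hTI hs) t ht)
  have hleft : ∀ y ∈ I, e * y = y := by
    intro y hy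
    have hmem : y - e * y ∈ T :=
      Submodule.subset_span ⟨1, y, hy, by rw [one_mul]⟩
    rw [hTbot, Submodule.mem_bot, sub_eq_zero] at hmem
    exact hmem.symm
  exact ⟨e, he, hleft, hu⟩

/-- left annihilator -/
def annL (I : Submodule F B) : Submodule F B where
  carrier := {x | ∀ y ∈ I, x * y = 0}
  add_mem' := fun {a b} ha hb => by
    intro y hy; rw [add_mul, ha y hy, hb y hy, add_zero]
  zero_mem' := fun y hy => by rw [zero_mul]
  smul_mem' := fun c x hx => by
    intro y hy; rw [smul_mul_assoc, hx y hy, smul_zero]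

lemma mem_annL {I : Submodule F B} {x : B} : x ∈ annL I ↔ ∀ y ∈ I, x * y = 0 :=
  Iff.rfl

lemma annL_compl (I : Submodule F B) (hl : ∀ b : B, ∀ x ∈ I, b * x ∈ I)
    (hr : ∀ b : B, ∀ x ∈ I, x * b ∈ I) :
    I ⊓ annL I = ⊥ ∧ I ⊔ annL I = ⊤ := by
  obtain ⟨e, he, heL, heR⟩ := exists_unit I hl hr
  constructor
  · rw [eq_bot_iff]
    rintro x ⟨hxI, hxA⟩
    rw [Submodule.mem_bot, ← heR x hxI, hxA e he]
  · rw [eq_top_iff]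
    intro b _
    have h1 : e * b ∈ I := hr b e he
    have h2 : b - e * b ∈ annL I := by
      intro y hy
      rw [sub_mul, mul_assoc, heL _ (hl b y hy), sub_self]
    have : b = e * b + (b - e * b) := by abel
    rw [this]
    exact Submodule.add_mem_sup h1 h2

end Semisimple

/-! ### Hopf module algebra lemmas -/

section Hopf
variable {F : Type*} [Field F]
    {H : Type*} [Ring H] [HopfAlgebra F H]
    {B : Type*} [Ring B] [Algebra F B]
    (ρ : H →ₐ[F] Module.End F B)

/-- the trilinear evaluation map  `a ⊗ (b ⊗ c) ↦ (ρ a x) * (ρ b (ρ (S c) y))` -/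
noncomputable def Phi3 (x y : B) : H ⊗[F] (H ⊗[F] H) →ₗ[F] B :=
  LinearMap.mul' F B ∘ₗ
    TensorProduct.map
      ((LinearMap.applyₗ x) ∘ₗ ρ.toLinearMap)
      ((TensorProduct.lift (LinearMap.id)) ∘ₗ
        TensorProduct.map ρ.toLinearMap
          ((LinearMap.applyₗ y) ∘ₗ ρ.toLinearMap ∘ₗ HopfAlgebra.antipode (R := F)))

@[simp] lemma Phi3_apply (x y : B) (a b c : H) :
    Phi3 ρ x y (a ⊗ₜ (b ⊗ₜ c))
      = (ρ a x) * (ρ b (ρ (HopfAlgebra.antipode (R := F) c) y)) := by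
  simp [Phi3, LinearMap.mul'_apply]

lemma aux_mulrule
    (hmod : ∀ (h : H) (a b : B),
      ρ h (a * b) = LinearMap.mul' F B
        ((TensorProduct.homTensorHomMap (RingHom.id F) B B B B)
          ((TensorProduct.map ρ.toLinearMap ρ.toLinearMap) (Coalgebra.comul h))
          (a ⊗ₜ[F] b)))
    (h : H) (a b : B) (r : Coalgebra.Repr F h (H × H)) :
    ρ h (a * b) = ∑ i ∈ r.index, ρ (r.left i) a * ρ (r.right i) b := by
  rw [hmod, ← r.eq]
  simp [map_sum, LinearMap.sum_apply, TensorProduct.homTensorHomMap_apply,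
    LinearMap.mul'_apply]

lemma aux_smul_eq_sum (c : H) (y : B) (r2 : Coalgebra.Repr F c (H × H)) :
    Coalgebra.counit (R := F) c • y
      = ∑ j ∈ r2.index,
          ρ (r2.left j) (ρ (HopfAlgebra.antipode (R := F) (r2.right j)) y) := by
  have h1 := HopfAlgebra.sum_mul_antipode_eq_smul (R := F) r2
  have h2 := congrArg (fun z : H => ρ z y) h1
  simp only [map_sum, map_smul, map_one, LinearMap.sum_apply, LinearMap.smul_apply,
    Module.End.one_apply, map_mul, Module.End.mul_apply] at h2
  exact h2.symm

lemma aux_counit_sum (h : H) (r : Coalgebra.Repr F h (H × H)) :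
    ∑ i ∈ r.index, Coalgebra.counit (R := F) (r.right i) • r.left i = h := by
  have h1 := Coalgebra.sum_tmul_counit_eq (R := F) r
  have h2 := congrArg (TensorProduct.rid F H) h1
  simp only [map_sum, rid_tmul, one_smul] at h2
  exact h2

lemma aux_coassoc_step (x y : B) (h : H) (r : Coalgebra.Repr F h (H × H))
    (a₁ : (i : H × H) → Coalgebra.Repr F (r.left i) (H × H))
    (a₂ : (i : H × H) → Coalgebra.Repr F (r.right i) (H × H)) :
    ∑ i ∈ r.index, ∑ j ∈ (a₂ i).index,
        (ρ (r.left i) x) * (ρ ((a₂ i).left j)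
          (ρ (HopfAlgebra.antipode (R := F) ((a₂ i).right j)) y))
    = ∑ i ∈ r.index, ∑ j ∈ (a₁ i).index,
        (ρ ((a₁ i).left j) x) * (ρ ((a₁ i).right j)
          (ρ (HopfAlgebra.antipode (R := F) (r.right i)) y)) := by
  have h1 := Coalgebra.sum_tmul_tmul_eq (R := F) r a₁ a₂
  have h2 := congrArg (Phi3 ρ x y) h1
  simpa [map_sum] using h2.symm

/-- Key lemma: the left annihilator of an `H`-invariant subspace is `H`-invariant. -/
lemma aux_annl_inv
    (hmod : ∀ (h : H) (a b : B),
      ρ h (a * b) = LinearMap.mul' F B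
        ((TensorProduct.homTensorHomMap (RingHom.id F) B B B B)
          ((TensorProduct.map ρ.toLinearMap ρ.toLinearMap) (Coalgebra.comul h))
          (a ⊗ₜ[F] b)))
    (I : Submodule F B) (hinv : ∀ (h : H), ∀ x ∈ I, ρ h x ∈ I)
    (x : B) (hx : ∀ y ∈ I, x * y = 0)
    (h : H) (y : B) (hy : y ∈ I) : (ρ h) x * y = 0 := by
  set r := Coalgebra.Repr.arbitrary F h with hr
  set a₁ : (i : H × H) → Coalgebra.Repr F (r.left i) (H × H) :=
    fun i => Coalgebra.Repr.arbitrary F (r.left i) with ha₁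
  set a₂ : (i : H × H) → Coalgebra.Repr F (r.right i) (H × H) :=
    fun i => Coalgebra.Repr.arbitrary F (r.right i) with ha₂
  have step1 : (ρ h) x * y
      = ∑ i ∈ r.index,
          (ρ (r.left i) x) * (Coalgebra.counit (R := F) (r.right i) • y) := by
    conv_lhs => rw [← aux_counit_sum (F := F) h r]
    simp only [map_sum, map_smul, LinearMap.sum_apply, LinearMap.smul_apply,
      Finset.sum_mul, smul_mul_assoc, mul_smul_comm]
  rw [step1]
  have step2 : ∀ i ∈ r.index,
      (ρ (r.left i) x) * (Coalgebra.counit (R := F) (r.right i) • y)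
      = ∑ j ∈ (a₂ i).index,
          (ρ (r.left i) x) * (ρ ((a₂ i).left j)
            (ρ (HopfAlgebra.antipode (R := F) ((a₂ i).right j)) y)) := by
    intro i _
    rw [aux_smul_eq_sum ρ (r.right i) y (a₂ i), Finset.mul_sum]
  rw [Finset.sum_congr rfl step2, aux_coassoc_step ρ x y h r a₁ a₂]
  have step3 : ∀ i ∈ r.index,
      ∑ j ∈ (a₁ i).index,
        (ρ ((a₁ i).left j) x) * (ρ ((a₁ i).right j)
          (ρ (HopfAlgebra.antipode (R := F) (r.right i)) y))
      = 0 := by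
    intro i _
    rw [← aux_mulrule ρ hmod (r.left i) x
        (ρ (HopfAlgebra.antipode (R := F) (r.right i)) y) (a₁ i)]
    rw [hx _ (hinv _ y hy), map_zero]
  rw [Finset.sum_congr rfl step3, Finset.sum_const_zero]

end Hopf

/-! ### H-invariant ideals and the decomposition -/

section Main
variable {F : Type*} [Field F]
    {H : Type*} [Ring H] [HopfAlgebra F H]
    {B : Type*} [Ring B] [Algebra F B] [IsSemisimpleRing B] [FiniteDimensional F B]
    (ρ : H →ₐ[F] Module.End F B)

/-- `H`-invariant two-sided ideal -/
def HIdl (P : Submodule F B) : Prop :=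
  (∀ b : B, ∀ x ∈ P, b * x ∈ P ∧ x * b ∈ P) ∧ (∀ h : H, ∀ x ∈ P, ρ h x ∈ P)

lemma annL_HIdl
    (hmod : ∀ (h : H) (a b : B),
      ρ h (a * b) = LinearMap.mul' F B
        ((TensorProduct.homTensorHomMap (RingHom.id F) B B B B)
          ((TensorProduct.map ρ.toLinearMap ρ.toLinearMap) (Coalgebra.comul h))
          (a ⊗ₜ[F] b)))
    (I : Submodule F B) (hI : HIdl ρ I) : HIdl ρ (annL I) := by
  refine ⟨fun b x hx => ⟨?_, ?_⟩, fun h x hx => ?_⟩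
  · intro y hy
    rw [mul_assoc, hx y hy, mul_zero]
  · intro y hy
    rw [mul_assoc, hx _ (hI.1 b y hy).1]
  · intro y hy
    exact aux_annl_inv ρ hmod I hI.2 x hx h y hy

lemma HIdl_inf {P Q : Submodule F B} (hP : HIdl ρ P) (hQ : HIdl ρ Q) :
    HIdl ρ (P ⊓ Q) := by
  refine ⟨fun b x hx => ?_, fun h x hx => ?_⟩
  · exact ⟨⟨(hP.1 b x hx.1).1, (hQ.1 b x hx.2).1⟩, ⟨(hP.1 b x hx.1).2, (hQ.1 b x hx.2).2⟩⟩
  · exact ⟨hP.2 h x hx.1, hQ.2 h x hx.2⟩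

lemma main_rec
    (hmod : ∀ (h : H) (a b : B),
      ρ h (a * b) = LinearMap.mul' F B
        ((TensorProduct.homTensorHomMap (RingHom.id F) B B B B)
          ((TensorProduct.map ρ.toLinearMap ρ.toLinearMap) (Coalgebra.comul h))
          (a ⊗ₜ[F] b))) :
    ∀ (n : ℕ) (P : Submodule F B), HIdl ρ P → Module.finrank F P ≤ n →
    ∃ (q : ℕ) (Bs : Fin q → Submodule F B),
      iSupIndep Bs ∧ (⨆ i, Bs i) = P ∧
      ∀ i, HIdl ρ (Bs i) ∧ Bs i ≠ ⊥ ∧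
        (∀ I : Submodule F B, I ≤ Bs i → HIdl ρ I → I = ⊥ ∨ I = Bs i) := by
  intro n
  induction n with
  | zero =>
      intro P _ hrk
      have hPbot : P = ⊥ := Submodule.finrank_eq_zero.mp (Nat.le_zero.mp hrk)
      exact ⟨0, Fin.elim0, fun i => i.elim0, by rw [iSup_of_empty]; exact hPbot.symm,
        fun i => i.elim0⟩
  | succ n ih =>
      intro P hP hrk
      by_cases hPbot : P = ⊥
      · exact ⟨0, Fin.elim0, fun i => i.elim0, by rw [iSup_of_empty]; exact hPbot.symm,
          fun i => i.elim0⟩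
      -- choose a minimal nonzero H-invariant ideal contained in P
      set s : Set ℕ :=
        {m | ∃ Q : Submodule F B, Q ≤ P ∧ HIdl ρ Q ∧ Q ≠ ⊥ ∧ Module.finrank F Q = m} with hs
      have hsne : s.Nonempty := ⟨Module.finrank F P, P, le_rfl, hP, hPbot, rfl⟩
      obtain ⟨Q, hQP, hQH, hQne, hQrk⟩ := Nat.sInf_mem hsne
      have hminrk : ∀ I : Submodule F B, I ≤ P → HIdl ρ I → I ≠ ⊥ →
          Module.finrank F Q ≤ Module.finrank F I := by
        intro I h1 h2 h3
        rw [hQrk]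
        exact Nat.sInf_le ⟨I, h1, h2, h3, rfl⟩
      have hQmin : ∀ I : Submodule F B, I ≤ Q → HIdl ρ I → I = ⊥ ∨ I = Q := by
        intro I hIQ hIH
        by_cases hIbot : I = ⊥
        · exact Or.inl hIbot
        · exact Or.inr (Submodule.eq_of_le_of_finrank_le hIQ
            (hminrk I (hIQ.trans hQP) hIH hIbot))
      -- split off Q using its left annihilator
      have hQl : ∀ b : B, ∀ x ∈ Q, b * x ∈ Q := fun b x hx => (hQH.1 b x hx).1
      have hQr : ∀ b : B, ∀ x ∈ Q, x * b ∈ Q := fun b x hx => (hQH.1 b x hx).2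
      obtain ⟨hinf, hsup⟩ := annL_compl Q hQl hQr
      have hJH : HIdl ρ (annL Q) := annL_HIdl ρ hmod Q hQH
      set R := P ⊓ annL Q with hR
      have hRH : HIdl ρ R := HIdl_inf ρ hP hJH
      have hQRdisj : Q ⊓ R = ⊥ := by
        rw [eq_bot_iff, ← hinf]
        exact le_inf inf_le_left (le_trans inf_le_right inf_le_right)
      have hQsupR : Q ⊔ R = P := by
        apply le_antisymm (sup_le hQP inf_le_left)
        intro b hb
        have hbtop : b ∈ Q ⊔ annL Q := by rw [hsup]; exact Submodule.mem_top
        obtain ⟨u, hu, v, hv, huv⟩ := Submodule.mem_sup.mp hbtop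
        have hvP : v ∈ P := by
          have : v = b - u := by rw [← huv]; abel
          rw [this]
          exact P.sub_mem hb (hQP hu)
        rw [← huv]
        exact Submodule.add_mem_sup hu ⟨hvP, hv⟩
      have hRlt : R < P := by
        refine lt_of_le_of_ne inf_le_left ?_
        intro hRP
        apply hQne
        rw [eq_bot_iff, ← hQRdisj]
        exact le_inf le_rfl (by rw [hRP]; exact hQP)
      have hRrk : Module.finrank F R ≤ n := by
        have h1 := Submodule.finrank_lt_finrank_of_lt hRlt
        omega
      obtain ⟨q, Bs, hind, hsupBs, hprops⟩ := ih R hRH hRrk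
      refine ⟨q + 1, Fin.cons Q Bs, ?_, ?_, ?_⟩
      · refine my_iSupIndep_cons hind ?_
        rw [hsupBs, disjoint_iff, hQRdisj]
      · rw [my_iSup_cons, hsupBs, hQsupR]
      · intro i
        refine Fin.cases ?_ ?_ i
        · exact ⟨hQH, hQne, hQmin⟩
        · intro k
          simpa using hprops k

end Main

/-- A finite dimensional semisimple `H`-module algebra over a field of characteristic 0,
where `H` is a finite dimensional semisimple Hopf algebra, decomposes as a direct sum of
`H`-invariant two-sided ideals, each of which is `H`-simple (its multiplication is nonzero
and it has no nonzero proper `H`-invariant two-sided ideal of itself). -/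
theorem hModuleAlgebra_decomposition (F : Type*) [Field F] [CharZero F]
    (H : Type*) [Ring H] [HopfAlgebra F H] [FiniteDimensional F H] [IsSemisimpleRing H]
    (B : Type*) [Ring B] [Algebra F B] [FiniteDimensional F B] [IsSemisimpleRing B]
    (ρ : H →ₐ[F] Module.End F B)
    (hmod : ∀ (h : H) (a b : B),
      ρ h (a * b) = LinearMap.mul' F B
        ((TensorProduct.homTensorHomMap (RingHom.id F) B B B B)
          ((TensorProduct.map ρ.toLinearMap ρ.toLinearMap) (Coalgebra.comul h))
          (a ⊗ₜ[F] b))) :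
    ∃ (q : ℕ) (Bs : Fin q → Submodule F B),
      DirectSum.IsInternal Bs ∧
      (∀ i, ∀ b : B, ∀ x ∈ Bs i, b * x ∈ Bs i ∧ x * b ∈ Bs i) ∧
      (∀ i (h : H), ∀ x ∈ Bs i, ρ h x ∈ Bs i) ∧
      -- each `Bs i` is `H`-simple:
      (∀ i, (∃ x ∈ Bs i, ∃ y ∈ Bs i, x * y ≠ 0) ∧
        ∀ I : Submodule F B, I ≤ Bs i →
          (∀ b ∈ Bs i, ∀ x ∈ I, b * x ∈ I ∧ x * b ∈ I) →
          (∀ (h : H), ∀ x ∈ I, ρ h x ∈ I) →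
          I = ⊥ ∨ I = Bs i) := by
  have htop : HIdl ρ (⊤ : Submodule F B) :=
    ⟨fun b x _ => ⟨Submodule.mem_top, Submodule.mem_top⟩,
     fun h x _ => Submodule.mem_top⟩
  obtain ⟨q, Bs, hind, hsup, hprops⟩ :=
    main_rec ρ hmod (Module.finrank F (⊤ : Submodule F B)) ⊤ htop le_rfl
  refine ⟨q, Bs, ?_, ?_, ?_, ?_⟩
  · exact (DirectSum.isInternal_submodule_iff_iSupIndep_and_iSup_eq_top Bs).mpr
      ⟨hind, hsup⟩
  · exact fun i b x hx => (hprops i).1.1 b x hx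
  · exact fun i h x hx => (hprops i).1.2 h x hx
  · intro i
    obtain ⟨hH, hne, hmin⟩ := hprops i
    obtain ⟨e, he, heL, heR⟩ := exists_unit (Bs i)
      (fun b x hx => (hH.1 b x hx).1) (fun b x hx => (hH.1 b x hx).2)
    have hene : e ≠ 0 := by
      intro h0
      apply hne
      rw [eq_bot_iff]
      intro y hy
      have := heL y hy
      rw [h0, zero_mul] at this
      rw [Submodule.mem_bot, ← this]
    constructor
    · refine ⟨e, he, e, he, ?_⟩
      rw [heL e he]
      exact hene
    · intro I hIle hImul hIH
      refine hmin I hIle ⟨fun b x hx => ?_, hIH⟩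
      have hxB : x ∈ Bs i := hIle hx
      constructor
      · have h1 : b * x = (b * e) * x := by rw [mul_assoc, heL x hxB]
        rw [h1]
        exact (hImul (b * e) (hH.1 b e he).1 x hx).1
      · have h1 : x * b = x * (e * b) := by rw [← mul_assoc, heR x hxB]
        rw [h1]
        exact (hImul (e * b) (hH.1 b e he).2 x hx).2
end

section
/- Let H = span_F{1, c, b, cb} be Sweedler's 4-dimensional Hopf algebra over a field F of characteristic 0 (relations c² = 1, b² = 0, bc = -cb). Let H* act on H by g·h = g(h₍₂₎)h₍₁₎ where Δ(c) = c⊗c, Δ(b) = c⊗b + b⊗1. Then H is H*-simple: H has no H*-invariant two-sided ideal other than 0 and H. -/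
private lemma smul_mem_cancel {F H : Type*} [Field F] [AddCommGroup H] [Module F H]
    {I : Submodule F H} {r : F} (hr : r ≠ 0) {y : H} (h : r • y ∈ I) : y ∈ I := by
  have := I.smul_mem r⁻¹ h
  rwa [smul_smul, inv_mul_cancel₀ hr, one_smul] at this

/-- Sweedler's 4-dimensional Hopf algebra `H` (with basis `1, c, b, cb`, `c² = 1`, `b² = 0`,
`bc = -cb`) is `H*`-simple under the action of its dual, given on the dual basis
`g₁, g_c, g_b, g_{cb}` by the action table: any two-sided ideal invariant under
`g₁, g_c, g_b, g_{cb}` is `0` or `H`. -/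
theorem sweedler_Hstar_simple (F : Type*) [Field F] [CharZero F]
    (H : Type*) [Ring H] [Algebra F H]
    (c b : H) (hc : c ^ 2 = 1) (hb : b ^ 2 = 0) (hbc : b * c = -(c * b))
    (bas : Module.Basis (Fin 4) F H)
    (hbas : bas 0 = 1 ∧ bas 1 = c ∧ bas 2 = b ∧ bas 3 = c * b)
    (g₁ gc gb gcb : H →ₗ[F] H)
    (hg₁ : g₁ 1 = 1 ∧ g₁ c = 0 ∧ g₁ b = b ∧ g₁ (c * b) = 0)
    (hgc : gc 1 = 0 ∧ gc c = c ∧ gc b = 0 ∧ gc (c * b) = c * b)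
    (hgb : gb 1 = 0 ∧ gb c = 0 ∧ gb b = c ∧ gb (c * b) = 0)
    (hgcb : gcb 1 = 0 ∧ gcb c = 0 ∧ gcb b = 0 ∧ gcb (c * b) = 1) :
    ∀ I : Submodule F H,
      (∀ a : H, ∀ x ∈ I, a * x ∈ I ∧ x * a ∈ I) →
      (∀ x ∈ I, g₁ x ∈ I ∧ gc x ∈ I ∧ gb x ∈ I ∧ gcb x ∈ I) →
      I = ⊥ ∨ I = ⊤ := by
  obtain ⟨hb0, hb1, hb2, hb3⟩ := hbas
  obtain ⟨h11, h12, h13, h14⟩ := hg₁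
  obtain ⟨h21, h22, h23, h24⟩ := hgc
  obtain ⟨h31, h32, h33, h34⟩ := hgb
  obtain ⟨h41, h42, h43, h44⟩ := hgcb
  intro I hmul hinv
  by_cases hbot : I = ⊥
  · exact Or.inl hbot
  right
  -- pick a nonzero element of I
  obtain ⟨x, hxI, hx0⟩ : ∃ x ∈ I, x ≠ 0 := by
    by_contra h
    push_neg at h
    exact hbot (by ext y; simp only [Submodule.mem_bot]
                   exact ⟨fun hy => h y hy, fun hy => hy ▸ I.zero_mem⟩)
  set r : Fin 4 → F := fun i => bas.repr x i with hr
  have hx : x = r 0 • (1 : H) + r 1 • c + r 2 • b + r 3 • (c * b) := by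
    rw [← hb3, ← hb2, ← hb1, ← hb0]
    have := bas.sum_repr x
    rw [Fin.sum_univ_four] at this
    exact this.symm
  have cI : c ∈ I → (1 : H) ∈ I := by
    intro hcI
    have := (hmul c c hcI).1
    rwa [← sq, hc] at this
  have key : (1 : H) ∈ I := by
    obtain ⟨hi1, hi2, hi3, hi4⟩ := hinv x hxI
    by_cases h3 : r 3 ≠ 0
    · have : gcb x = r 3 • (1 : H) := by
        rw [hx]; simp [h41, h42, h43, h44]
      rw [this] at hi4
      exact smul_mem_cancel h3 hi4
    push_neg at h3
    by_cases h2 : r 2 ≠ 0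
    · have : gb x = r 2 • c := by
        rw [hx]; simp [h31, h32, h33, h34]
      rw [this] at hi3
      exact cI (smul_mem_cancel h2 hi3)
    push_neg at h2
    by_cases h1 : r 1 ≠ 0
    · have : gc x = r 1 • c := by
        rw [hx]; simp [h21, h22, h23, h24, h3]
      rw [this] at hi2
      exact cI (smul_mem_cancel h1 hi2)
    push_neg at h1
    by_cases h0 : r 0 ≠ 0
    · have : g₁ x = r 0 • (1 : H) := by
        rw [hx]; simp [h11, h12, h13, h14, h2]
      rw [this] at hi1
      exact smul_mem_cancel h0 hi1
    push_neg at h0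
    exfalso
    apply hx0
    rw [hx, h0, h1, h2, h3]
    simp
  rw [Submodule.eq_top_iff']
  intro a
  have := (hmul a 1 key).1
  rwa [mul_one] at this
end

section
/- Let H be Sweedler's 4-dimensional Hopf algebra over a field F of characteristic 0 with the H*-action given above. The multilinear H*-polynomial f₁(x₁,x₂,x₃,x₄) = Σ_{σ∈S₄} sign(σ) x_{σ(1)}^{g₁} x_{σ(2)}^{g_c} x_{σ(3)}^{g_b} x_{σ(4)}^{g_{cb}}, evaluated at (x₁,x₂,x₃,x₄) = (1, c, b, cb), equals 1. In particular f₁ is alternating in its four variables and is not an H*-identity of H. -/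
open Equiv

/-- In Sweedler's 4-dimensional Hopf algebra `H` with the `H*`-action of the dual basis
`g₁, g_c, g_b, g_{cb}`, the multilinear `H*`-polynomial
`f₁(x₁,x₂,x₃,x₄) = ∑_{σ∈S₄} sign σ · x_{σ(1)}^{g₁} x_{σ(2)}^{g_c} x_{σ(3)}^{g_b} x_{σ(4)}^{g_{cb}}`
takes the value `1` at `(1, c, b, cb)`; in particular it is alternating in its four
variables and is not an `H*`-identity of `H`. -/
theorem sweedler_alternating_polynomial (F : Type*) [Field F] [CharZero F]
    (H : Type*) [Ring H] [Algebra F H]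
    (c b : H) (hc : c ^ 2 = 1) (hb : b ^ 2 = 0) (hbc : b * c = -(c * b))
    (bas : Module.Basis (Fin 4) F H)
    (hbas : bas 0 = 1 ∧ bas 1 = c ∧ bas 2 = b ∧ bas 3 = c * b)
    (g₁ gc gb gcb : H →ₗ[F] H)
    (hg₁ : g₁ 1 = 1 ∧ g₁ c = 0 ∧ g₁ b = b ∧ g₁ (c * b) = 0)
    (hgc : gc 1 = 0 ∧ gc c = c ∧ gc b = 0 ∧ gc (c * b) = c * b)
    (hgb : gb 1 = 0 ∧ gb c = 0 ∧ gb b = c ∧ gb (c * b) = 0)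
    (hgcb : gcb 1 = 0 ∧ gcb c = 0 ∧ gcb b = 0 ∧ gcb (c * b) = 1) :
    ∀ f₁ : (Fin 4 → H) → H,
      f₁ = (fun x => ∑ σ : Perm (Fin 4), (Perm.sign σ : ℤ) •
        (g₁ (x (σ 0)) * gc (x (σ 1)) * gb (x (σ 2)) * gcb (x (σ 3)))) →
      f₁ ![1, c, b, c * b] = 1 ∧
      (∀ (x : Fin 4 → H) (i j : Fin 4), i ≠ j → x i = x j → f₁ x = 0) ∧
      (∃ x : Fin 4 → H, f₁ x ≠ 0) := by
  obtain ⟨hb0, hb1, hb2, hb3⟩ := hbas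
  obtain ⟨ha1, ha2, ha3, ha4⟩ := hg₁
  obtain ⟨hc1, hc2, hc3, hc4⟩ := hgc
  obtain ⟨hd1, hd2, hd3, hd4⟩ := hgb
  obtain ⟨he1, he2, he3, he4⟩ := hgcb
  have hone : (1 : H) ≠ 0 := hb0 ▸ bas.ne_zero 0
  have hcc : c * c = 1 := by rw [← pow_two]; exact hc
  intro f₁ hf
  subst hf
  have hval : (∑ σ : Perm (Fin 4), (Perm.sign σ : ℤ) •
      (g₁ (![1, c, b, c * b] (σ 0)) * gc (![1, c, b, c * b] (σ 1)) *
        gb (![1, c, b, c * b] (σ 2)) * gcb (![1, c, b, c * b] (σ 3)))) = 1 := by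
    rw [Finset.sum_eq_single (1 : Perm (Fin 4))]
    · simp [ha1, hc2, hd3, he4, hcc]
    · intro σ _ hσ
      generalize hk3 : σ 3 = k3
      fin_cases k3
      · simp [he1]
      · simp [he2]
      · simp [he3]
      · generalize hk2 : σ 2 = k2
        fin_cases k2
        · simp [hd1]
        · simp [hd2]
        · generalize hk1 : σ 1 = k1
          fin_cases k1
          · simp [hc1]
          · exfalso
            apply hσ
            have hk0 : σ 0 = 0 := by
              generalize hk0 : σ 0 = k0
              fin_cases k0
              · rfl
              · exact absurd (σ.injective (hk0.trans hk1.symm)) (by decide)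
              · exact absurd (σ.injective (hk0.trans hk2.symm)) (by decide)
              · exact absurd (σ.injective (hk0.trans hk3.symm)) (by decide)
            ext i
            fin_cases i <;> simp_all
          · exact absurd (σ.injective (hk1.trans hk2.symm)) (by decide)
          · exact absurd (σ.injective (hk1.trans hk3.symm)) (by decide)
        · exact absurd (σ.injective (hk2.trans hk3.symm)) (by decide)
    · simp
  refine ⟨hval, ?_, ⟨![1, c, b, c * b], fun h => hone (hval.symm.trans h)⟩⟩
  intro x i j hij hxy
  set τ := Equiv.swap i j with hτ
  set S := ∑ σ : Perm (Fin 4), (Perm.sign σ : ℤ) •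
      (g₁ (x (σ 0)) * gc (x (σ 1)) * gb (x (σ 2)) * gcb (x (σ 3))) with hS
  have hxτ : ∀ k, x (τ k) = x k := by
    intro k
    rcases eq_or_ne k i with rfl | hki
    · simpa [τ, Equiv.swap_apply_left] using hxy.symm
    rcases eq_or_ne k j with rfl | hkj
    · simpa [τ, Equiv.swap_apply_right] using hxy
    · simp [τ, Equiv.swap_apply_of_ne_of_ne hki hkj]
  have hneg : ∀ σ : Perm (Fin 4),
      (Perm.sign (τ * σ) : ℤ) • (g₁ (x ((τ * σ) 0)) * gc (x ((τ * σ) 1)) *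
        gb (x ((τ * σ) 2)) * gcb (x ((τ * σ) 3)))
      = -((Perm.sign σ : ℤ) • (g₁ (x (σ 0)) * gc (x (σ 1)) *
        gb (x (σ 2)) * gcb (x (σ 3)))) := by
    intro σ
    have hs : (Perm.sign (τ * σ) : ℤ) = -(Perm.sign σ : ℤ) := by
      simp [Perm.sign_mul, Perm.sign_swap hij, τ]
    rw [hs]
    simp [Perm.mul_apply, hxτ, neg_smul]
  have hSS : S = -S := by
    calc S = ∑ σ : Perm (Fin 4), (Perm.sign (τ * σ) : ℤ) •
        (g₁ (x ((τ * σ) 0)) * gc (x ((τ * σ) 1)) * gb (x ((τ * σ) 2)) * gcb (x ((τ * σ) 3))) :=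
          (Fintype.sum_equiv (Equiv.mulLeft τ) _ _ fun σ => rfl).symm
      _ = ∑ σ : Perm (Fin 4), -((Perm.sign σ : ℤ) •
        (g₁ (x (σ 0)) * gc (x (σ 1)) * gb (x (σ 2)) * gcb (x (σ 3)))) :=
          Finset.sum_congr rfl fun σ _ => hneg σ
      _ = -S := by rw [Finset.sum_neg_distrib]
  have h2 : (2 : F) • S = 0 := by
    rw [two_smul]
    nth_rewrite 1 [hSS]
    exact neg_add_cancel S
  calc S = (2 : F)⁻¹ • ((2 : F) • S) := (inv_smul_smul₀ two_ne_zero S).symm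
    _ = 0 := by rw [h2, smul_zero]
end
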